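/- Let Ω be a probability space, n ≥ 1 and K ≥ 1 integers, 𝒳 and 𝒰 nonempty finite alphabets, and let U : Ω → 𝒰, X_1,…,X_n : Ω → 𝒳 and S_1,…,S_n : Ω → (Fin K → Bool) be random variables. Let δ_1,…,δ_K ∈ [0,1). Assume: (i) for each slot i and each user k, P(S_i(k) = false) = δ_k, and for each i the components (S_i(1),…,S_i(K)) are mutually independent; (ii) for each i, S_i is independent of the joint tuple (U, X_1,…,X_i, S_1,…,S_{i−1}). Define Y_{k,i} : Ω → Option 𝒳 by Y_{k,i} = some(X_i) if S_i(k) = true and Y_{k,i} = none otherwise. Then for every nonempty set 𝒥 ⊆ {1,…,K}: H[ (Y_{k,i})_{k∈𝒥, 1≤i≤n} | (U, S_1,…,S_n) ] = (1 − ∏_{k∈𝒥} δ_k) · Σ_{i=1}^n H[ X_i | ( (Y_{k,t})_{k∈𝒥, t≤i−1}, U, S_1,…,S_{i−1} ) ]. -/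

import Mathlib

open MeasureTheory ProbabilityTheory

/-- Shannon entropy (in nats) of a finite-valued random variable. -/
noncomputable def entropy {Ω : Type*} [MeasurableSpace Ω] (μ : Measure Ω)
    {α : Type*} [Fintype α] (X : Ω → α) : ℝ :=
  ∑ x : α, Real.negMulLog (μ (X ⁻¹' {x})).toReal

/-- Shannon conditional entropy `H[X | Y] = H[(X,Y)] - H[Y]` of finite-valued
random variables. -/
noncomputable def condEntropy {Ω : Type*} [MeasurableSpace Ω] (μ : Measure Ω)
    {α β : Type*} [Fintype α] [Fintype β] (X : Ω → α) (Y : Ω → β) : ℝ :=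
  entropy μ (fun ω => (X ω, Y ω)) - entropy μ Y

set_option linter.unusedSectionVars false

namespace ErasureAux

/-- indicator with a fixed (classical) decidability instance. -/
noncomputable def ind01 (P : Prop) (x : ℝ) : ℝ := by
  classical exact if P then x else 0

lemma ind01_pos {P : Prop} (h : P) (x : ℝ) : ind01 P x = x := by
  unfold ind01; simp [h]

lemma ind01_neg {P : Prop} (h : ¬P) (x : ℝ) : ind01 P x = 0 := by
  unfold ind01; simp [h]

lemma ind01_congr {P Q : Prop} (h : P ↔ Q) (x : ℝ) : ind01 P x = ind01 Q x := by
  by_cases hp : P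
  · rw [ind01_pos hp, ind01_pos (h.1 hp)]
  · rw [ind01_neg hp, ind01_neg (fun hq => hp (h.2 hq))]

lemma mul_ind01 (c : ℝ) (P : Prop) (x : ℝ) : c * ind01 P x = ind01 P (c * x) := by
  by_cases hp : P
  · rw [ind01_pos hp, ind01_pos hp]
  · rw [ind01_neg hp, ind01_neg hp, mul_zero]

lemma ind01_and_left {P Q : Prop} (x : ℝ) : ind01 (P ∧ Q) x = ind01 Q (ind01 P x) := by
  by_cases hq : Q
  · rw [ind01_pos hq, ind01_congr (and_iff_left hq)]
  · rw [ind01_neg hq, ind01_neg (fun h => hq h.2)]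

variable {M : Type*} [Fintype M]

/-- fiber probability of a finite-valued map under a pmf `p`. -/
noncomputable def pr (p : M → ℝ) {β : Type*} (f : M → β) (y : β) : ℝ :=
  ∑ m, ind01 (f m = y) (p m)

/-- entropy of a finite-valued map under a pmf `p`. -/
noncomputable def ent (p : M → ℝ) {β : Type*} [Fintype β] (f : M → β) : ℝ :=
  ∑ y, Real.negMulLog (pr p f y)

/-- conditional entropy. -/
noncomputable def cent (p : M → ℝ) {α β : Type*} [Fintype α] [Fintype β]
    (f : M → α) (g : M → β) : ℝ :=
  ent p (fun m => (f m, g m)) - ent p g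

/-- pointwise independence of two finite-valued maps. -/
def Ind (p : M → ℝ) {α β : Type*} (f : M → α) (g : M → β) : Prop :=
  ∀ a b, pr p (fun m => (f m, g m)) (a, b) = pr p f a * pr p g b

variable (p : M → ℝ)

lemma pr_singleton_sum {β : Type*} [Fintype β] (f : M → β) (m : M) :
    ∑ y, ind01 (f m = y) (p m) = p m := by
  rw [Finset.sum_eq_single_of_mem (f m) (Finset.mem_univ _)]
  · exact ind01_pos rfl _
  · intro y _ hy
    exact ind01_neg (fun hh => hy hh.symm) _

lemma sum_pr {β : Type*} [Fintype β] (f : M → β) : ∑ y, pr p f y = ∑ m, p m := by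
  unfold pr
  rw [Finset.sum_comm]
  exact Finset.sum_congr rfl fun m _ => pr_singleton_sum p f m

lemma pr_congr_fiber {β γ : Type*} {f : M → β} {g : M → γ} {y : β} {z : γ}
    (h : ∀ m, f m = y ↔ g m = z) : pr p f y = pr p g z :=
  Finset.sum_congr rfl fun m _ => ind01_congr (h m) _

lemma exists_of_pr_ne_zero {β : Type*} {f : M → β} {y : β} (h : pr p f y ≠ 0) :
    ∃ m, f m = y := by
  by_contra hc
  push_neg at hc
  exact h (Finset.sum_eq_zero fun m _ => ind01_neg (hc m) _)

lemma pr_comp_fiber {β γ : Type*} [Fintype β] (f : M → β) (e : β → γ) (c : γ) :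
    pr p (fun m => e (f m)) c = ∑ b, ind01 (e b = c) (pr p f b) := by
  unfold pr
  have key : ∀ b : β, ind01 (e b = c) (∑ m, ind01 (f m = b) (p m))
      = ∑ m, ind01 (f m = b ∧ e b = c) (p m) := by
    intro b
    by_cases h : e b = c
    · rw [ind01_pos h]
      exact Finset.sum_congr rfl fun m _ => (ind01_congr (and_iff_left h) _).symm
    · rw [ind01_neg h]
      exact (Finset.sum_eq_zero fun m _ => ind01_neg (fun hh => h hh.2) _).symm
  refine Eq.trans ?_ (Finset.sum_congr rfl fun b _ => (key b)).symm
  rw [Finset.sum_comm]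
  refine Finset.sum_congr rfl fun m _ => ?_
  by_cases h : e (f m) = c
  · rw [ind01_pos h, Finset.sum_eq_single_of_mem (f m) (Finset.mem_univ _)]
    · rw [ind01_pos ⟨rfl, h⟩]
    · intro b _ hb
      exact ind01_neg (fun hh => hb hh.1.symm) _
  · rw [ind01_neg h]
    refine (Finset.sum_eq_zero fun b _ => ?_).symm
    refine ind01_neg ?_ _
    rintro ⟨h1, h2⟩
    exact h (by rw [h1, h2])

lemma pr_marg {α β : Type*} [Fintype β] (f : M → α) (g : M → β) (a : α) :
    pr p f a = ∑ b, pr p (fun m => (f m, g m)) (a, b) := by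
  unfold pr
  rw [Finset.sum_comm]
  refine Finset.sum_congr rfl fun m _ => ?_
  by_cases h : f m = a
  · rw [ind01_pos h, Finset.sum_eq_single_of_mem (g m) (Finset.mem_univ _)]
    · rw [ind01_pos (show (f m, g m) = (a, g m) by rw [h])]
    · intro b _ hb
      exact ind01_neg (fun hh => hb ((Prod.ext_iff.1 hh).2.symm)) _
  · rw [ind01_neg h]
    exact (Finset.sum_eq_zero fun b _ =>
      ind01_neg (fun hh => h (Prod.ext_iff.1 hh).1) _).symm

/-- entropy only depends on the induced partition. -/
lemma ent_congr {β γ : Type*} [Fintype β] [Fintype γ] {f : M → β} {g : M → γ}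
    (e : γ → β) (e' : β → γ) (hfg : ∀ m, f m = e (g m)) (hgf : ∀ m, g m = e' (f m)) :
    ent p f = ent p g := by
  classical
  have claimA : ∀ m : M, ∀ m' : M, (f m' = f m ↔ g m' = e' (f m)) := by
    intro m m'
    constructor
    · intro h; rw [hgf m', h]
    · intro h; rw [hfg m', h, ← hgf m, ← hfg m]
  have claimB : ∀ m : M, ∀ m' : M, (f m' = e (g m) ↔ g m' = g m) := by
    intro m m'
    constructor
    · intro h; rw [hgf m', h, ← hfg m, ← hgf m]
    · intro h; rw [hfg m', h]
  unfold ent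
  rw [← Finset.sum_subset (Finset.filter_subset (fun y => pr p f y ≠ 0) Finset.univ)
      (fun y _ hy => by
        simp only [Finset.mem_filter, Finset.mem_univ, true_and, not_not] at hy
        simp [hy]),
    ← Finset.sum_subset (Finset.filter_subset (fun z => pr p g z ≠ 0) Finset.univ)
      (fun z _ hz => by
        simp only [Finset.mem_filter, Finset.mem_univ, true_and, not_not] at hz
        simp [hz])]
  refine Finset.sum_nbij' (fun y => e' y) (fun z => e z) ?_ ?_ ?_ ?_ ?_
  · intro y hy
    simp only [Finset.mem_filter, Finset.mem_univ, true_and] at hy ⊢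
    obtain ⟨m, hm⟩ := exists_of_pr_ne_zero p hy
    subst hm
    rwa [← pr_congr_fiber p (claimA m)]
  · intro z hz
    simp only [Finset.mem_filter, Finset.mem_univ, true_and] at hz ⊢
    obtain ⟨m, hm⟩ := exists_of_pr_ne_zero p hz
    subst hm
    rwa [pr_congr_fiber p (claimB m)]
  · intro y hy
    simp only [Finset.mem_filter, Finset.mem_univ, true_and] at hy
    obtain ⟨m, hm⟩ := exists_of_pr_ne_zero p hy
    subst hm
    show e (e' (f m)) = f m
    rw [← hgf m, ← hfg m]
  · intro z hz
    simp only [Finset.mem_filter, Finset.mem_univ, true_and] at hz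
    obtain ⟨m, hm⟩ := exists_of_pr_ne_zero p hz
    subst hm
    show e' (e (g m)) = g m
    rw [← hfg m, ← hgf m]
  · intro y hy
    simp only [Finset.mem_filter, Finset.mem_univ, true_and] at hy
    obtain ⟨m, hm⟩ := exists_of_pr_ne_zero p hy
    subst hm
    rw [pr_congr_fiber p (claimA m)]

lemma ent_comp_inj {β γ : Type*} [Fintype β] [Fintype γ] [Nonempty γ]
    {g : M → γ} (e : γ → β) (he : Function.Injective e) :
    ent p (fun m => e (g m)) = ent p g :=
  ent_congr p e (Function.invFun e) (fun _ => rfl)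
    (fun m => (Function.leftInverse_invFun he (g m)).symm)

lemma pr_map_snd {α β γ : Type*} [Fintype β] (f : M → α) (g : M → β) (e : β → γ)
    (a : α) (c : γ) :
    pr p (fun m => (f m, e (g m))) (a, c)
      = ∑ b : β, ind01 (e b = c) (pr p (fun m => (f m, g m)) (a, b)) := by
  unfold pr
  have key : ∀ b : β, ind01 (e b = c) (∑ m, ind01 ((f m, g m) = (a, b)) (p m))
      = ∑ m, ind01 ((f m, g m) = (a, b) ∧ e b = c) (p m) := by
    intro b
    by_cases h : e b = c
    · rw [ind01_pos h]
      exact Finset.sum_congr rfl fun m _ => (ind01_congr (and_iff_left h) _).symm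
    · rw [ind01_neg h]
      exact (Finset.sum_eq_zero fun m _ => ind01_neg (fun hh => h hh.2) _).symm
  refine Eq.trans ?_ (Finset.sum_congr rfl fun b _ => (key b)).symm
  rw [Finset.sum_comm]
  refine Finset.sum_congr rfl fun m _ => ?_
  by_cases h : (f m, e (g m)) = (a, c)
  · rw [ind01_pos h, Finset.sum_eq_single_of_mem (g m) (Finset.mem_univ _)]
    · have h1 : f m = a := (Prod.ext_iff.1 h).1
      have h2 : e (g m) = c := (Prod.ext_iff.1 h).2
      rw [ind01_pos ⟨by rw [h1], h2⟩]
    · intro b _ hb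
      exact ind01_neg (fun hh => hb ((Prod.ext_iff.1 hh.1).2.symm)) _
  · rw [ind01_neg h]
    refine (Finset.sum_eq_zero fun b _ => ?_).symm
    refine ind01_neg ?_ _
    rintro ⟨h1, h2⟩
    have hf : f m = a := congrArg Prod.fst h1
    have hg : g m = b := congrArg Prod.snd h1
    exact h (by rw [hf, hg, h2])

lemma ind_symm {α β : Type*} {f : M → α} {g : M → β} (h : Ind p f g) : Ind p g f := by
  intro b a
  rw [pr_congr_fiber p (y := (b, a)) (z := (a, b))
      (g := fun m => (f m, g m)) (fun m => by constructor <;> (intro hh; simp_all [Prod.ext_iff]))]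
  rw [h a b, mul_comm]

lemma ind_comp_right {α β γ : Type*} [Fintype β] {f : M → α} {g : M → β}
    (h : Ind p f g) (e : β → γ) : Ind p f (fun m => e (g m)) := by
  intro a c
  refine (pr_map_snd p f g e a c).trans ?_
  have h2 := pr_comp_fiber p g e c
  calc ∑ b : β, ind01 (e b = c) (pr p (fun m => (f m, g m)) (a, b))
      = ∑ b : β, pr p f a * ind01 (e b = c) (pr p g b) := by
        refine Finset.sum_congr rfl fun b _ => ?_
        rw [mul_ind01]
        by_cases hh : e b = c
        · rw [ind01_pos hh, ind01_pos hh, h a b]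
        · rw [ind01_neg hh, ind01_neg hh]
    _ = pr p f a * ∑ b : β, ind01 (e b = c) (pr p g b) := by rw [← Finset.mul_sum]
    _ = pr p f a * pr p (fun m => e (g m)) c := by rw [← h2]

lemma ind_comp_left {α β γ : Type*} [Fintype α] {f : M → α} {g : M → β}
    (h : Ind p f g) (e : α → γ) : Ind p (fun m => e (f m)) g :=
  ind_symm p (ind_comp_right p (ind_symm p h) e)

/-- congruence for `Ind`. -/
lemma ind_congr {α β : Type*} {f f' : M → α} {g g' : M → β}
    (hf : ∀ m, f m = f' m) (hg : ∀ m, g m = g' m) (h : Ind p f g) : Ind p f' g' := by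
  have h1 : f = f' := funext hf
  have h2 : g = g' := funext hg
  subst h1; subst h2
  exact h

lemma pr_const_self (hp1 : ∑ m, p m = 1) {α : Type*} (c : α) : pr p (fun _ => c) c = 1 := by
  unfold pr
  rw [← hp1]
  exact Finset.sum_congr rfl fun m _ => ind01_pos rfl _

lemma ind_const (hp1 : ∑ m, p m = 1) {α β : Type*} (c : α) (g : M → β) :
    Ind p (fun _ => c) g := by
  intro a b
  by_cases h : a = c
  · subst h
    rw [pr_const_self p hp1, one_mul]
    exact pr_congr_fiber p fun m => by simp
  · have h1 : pr p (fun _ => c) a = 0 :=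
      Finset.sum_eq_zero fun m _ => ind01_neg (fun hh => h hh.symm) _
    rw [h1, zero_mul]
    exact Finset.sum_eq_zero fun m _ =>
      ind01_neg (fun h2 => h ((Prod.ext_iff.1 h2).1.symm)) _

/-- if `c ⟂ (a, b)` and `a ⟂ b`, then `(a, c) ⟂ b`. -/
lemma ind_pair {α β γ : Type*} [Fintype γ] [Fintype β] {a : M → α} {b : M → β} {c : M → γ}
    (hp1 : ∑ m, p m = 1) (hab : Ind p a b) (hc : Ind p c (fun m => (a m, b m))) :
    Ind p (fun m => (a m, c m)) b := by
  have key : ∀ (x : α) (z : γ) (y : β), pr p (fun m => ((a m, c m), b m)) ((x, z), y)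
      = pr p c z * (pr p a x * pr p b y) := by
    intro x z y
    have e1 : pr p (fun m => ((a m, c m), b m)) ((x, z), y)
        = pr p (fun m => (c m, (a m, b m))) (z, (x, y)) :=
      pr_congr_fiber p fun m => by constructor <;> (intro hh; simp_all [Prod.ext_iff])
    rw [e1, hc z (x, y), hab x y]
  have key2 : ∀ (x : α) (z : γ), pr p (fun m => (a m, c m)) (x, z)
      = pr p c z * pr p a x := by
    intro x z
    rw [pr_marg p (fun m => (a m, c m)) b (x, z)]
    calc ∑ y : β, pr p (fun m => ((a m, c m), b m)) ((x, z), y)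
        = ∑ y : β, pr p c z * pr p a x * pr p b y := by
          refine Finset.sum_congr rfl fun y _ => ?_
          rw [key x z y]; ring
      _ = pr p c z * pr p a x * ∑ y : β, pr p b y := by rw [← Finset.mul_sum]
      _ = pr p c z * pr p a x := by rw [sum_pr p b, hp1, mul_one]
  rintro ⟨x, z⟩ y
  rw [key x z y, key2 x z]; ring

/-- entropy adds for independent variables. -/
lemma ent_pair_of_ind {α β : Type*} [Fintype α] [Fintype β]
    (hp1 : ∑ m, p m = 1) {f : M → α} {g : M → β} (h : Ind p f g) :
    ent p (fun m => (f m, g m)) = ent p f + ent p g := by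
  unfold ent
  rw [Fintype.sum_prod_type]
  calc ∑ a, ∑ b, Real.negMulLog (pr p (fun m => (f m, g m)) (a, b))
      = ∑ a, ∑ b, (pr p g b * Real.negMulLog (pr p f a)
          + pr p f a * Real.negMulLog (pr p g b)) := by
        refine Finset.sum_congr rfl fun a _ => Finset.sum_congr rfl fun b _ => ?_
        rw [h a b, Real.negMulLog_mul]
    _ = ∑ a, ((∑ b, pr p g b) * Real.negMulLog (pr p f a)
          + pr p f a * ∑ b, Real.negMulLog (pr p g b)) := by
        refine Finset.sum_congr rfl fun a _ => ?_
        rw [Finset.sum_add_distrib, ← Finset.sum_mul, ← Finset.mul_sum]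
    _ = ∑ a, (Real.negMulLog (pr p f a)
          + pr p f a * ∑ b, Real.negMulLog (pr p g b)) := by
        rw [sum_pr p g, hp1]; simp
    _ = _ := by
        rw [Finset.sum_add_distrib, ← Finset.sum_mul]
        rw [sum_pr p f, hp1, one_mul]

/-- congruence for conditional entropy in the conditioning variable. -/
lemma cent_congr_right {α β γ : Type*} [Fintype α] [Fintype β] [Fintype γ]
    {f : M → α} {g : M → β} {g' : M → γ} (e : γ → β) (e' : β → γ)
    (hfg : ∀ m, g m = e (g' m)) (hgf : ∀ m, g' m = e' (g m)) :
    cent p f g = cent p f g' := by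
  unfold cent
  rw [ent_congr p e e' hfg hgf,
    ent_congr p (f := fun m => (f m, g m)) (g := fun m => (f m, g' m))
      (fun q => (q.1, e q.2)) (fun q => (q.1, e' q.2))
      (fun m => show (f m, g m) = (f m, e (g' m)) by rw [hfg m])
      (fun m => show (f m, g' m) = (f m, e' (g m)) by rw [hgf m])]

/-- dropping an independent variable from the conditioning side. -/
lemma cent_drop {α β γ : Type*} [Fintype α] [Fintype β] [Fintype γ]
    (hp1 : ∑ m, p m = 1) {a : M → α} {b : M → β} {d : M → γ}
    (hind : Ind p d (fun m => (a m, b m))) :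
    cent p a (fun m => (b m, d m)) = cent p a b := by
  unfold cent
  have h1 : ent p (fun m => (a m, (b m, d m)))
      = ent p (fun m => ((a m, b m), d m)) :=
    ent_congr p (fun q => (q.1.1, (q.1.2, q.2))) (fun q => ((q.1, q.2.1), q.2.2))
      (fun m => rfl) (fun m => rfl)
  rw [h1, ent_pair_of_ind p hp1 (ind_symm p hind),
    ent_pair_of_ind p hp1 (ind_symm p (ind_comp_right p hind Prod.snd))]
  ring

/-- conditioning on an independent `T`: the conditional entropy of `F (T, V)`
given `(C, T)` splits as a mixture over the values of `T`. -/
lemma cent_split {σ χ γ β : Type*} [Fintype σ] [Fintype χ] [Fintype γ] [Fintype β]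
    (hp1 : ∑ m, p m = 1) (T : M → σ) (V : M → χ) (C : M → γ) (F : σ → χ → β)
    (hind : Ind p T (fun m => (V m, C m))) :
    cent p (fun m => F (T m) (V m)) (fun m => (C m, T m))
      = ∑ s, pr p T s * cent p (fun m => F s (V m)) C := by
  have key : ∀ (s : σ) (q : β × γ),
      pr p (fun m => ((F (T m) (V m), C m), T m)) (q, s)
        = pr p T s * pr p (fun m => (F s (V m), C m)) q := by
    intro s q
    have hL := pr_comp_fiber p (fun m => (T m, (V m, C m)))
        (fun w : σ × (χ × γ) => ((F w.1 w.2.1, w.2.2), w.1)) (q, s)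
    have hR := pr_comp_fiber p (fun m => (V m, C m))
        (fun w : χ × γ => (F s w.1, w.2)) q
    refine hL.trans ?_
    rw [Fintype.sum_prod_type]
    rw [Finset.sum_eq_single_of_mem s (Finset.mem_univ _)]
    · refine Eq.trans ?_ (congrArg (fun r => pr p T s * r) hR.symm)
      beta_reduce
      rw [Finset.mul_sum]
      refine Finset.sum_congr rfl fun w _ => ?_
      rw [hind s w, mul_ind01]
      refine ind01_congr ?_ _
      constructor
      · intro hh
        exact congrArg Prod.fst hh
      · intro hh
        rw [show (F s w.1, w.2) = q from hh]
    · intro s' _ hs'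
      refine Finset.sum_eq_zero fun w _ => ?_
      exact ind01_neg (fun hh => hs' (congrArg Prod.snd hh)) _
  have hCT : Ind p C T := ind_symm p (ind_comp_right p hind Prod.snd)
  have hEnt : ent p (fun m => ((F (T m) (V m), C m), T m))
      = (∑ s, pr p T s * ent p (fun m => (F s (V m), C m))) + ent p T := by
    unfold ent
    rw [Fintype.sum_prod_type, Finset.sum_comm]
    have inner : ∀ s : σ, ∑ q : β × γ,
        Real.negMulLog (pr p (fun m => ((F (T m) (V m), C m), T m)) (q, s))
        = pr p T s * (∑ q : β × γ, Real.negMulLog (pr p (fun m => (F s (V m), C m)) q))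
          + Real.negMulLog (pr p T s) := by
      intro s
      calc ∑ q : β × γ, Real.negMulLog (pr p (fun m => ((F (T m) (V m), C m), T m)) (q, s))
          = ∑ q : β × γ, (pr p (fun m => (F s (V m), C m)) q * Real.negMulLog (pr p T s)
              + pr p T s * Real.negMulLog (pr p (fun m => (F s (V m), C m)) q)) := by
            refine Finset.sum_congr rfl fun q _ => ?_
            rw [key s q, Real.negMulLog_mul]
        _ = (∑ q : β × γ, pr p (fun m => (F s (V m), C m)) q) * Real.negMulLog (pr p T s)
              + pr p T s * ∑ q : β × γ, Real.negMulLog (pr p (fun m => (F s (V m), C m)) q) := by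
            rw [Finset.sum_add_distrib, ← Finset.sum_mul, ← Finset.mul_sum]
        _ = _ := by
            rw [sum_pr p (fun m => (F s (V m), C m)), hp1, one_mul, add_comm]
    rw [Finset.sum_congr rfl fun s _ => inner s, Finset.sum_add_distrib]
  have hAssoc : ent p (fun m => (F (T m) (V m), (C m, T m)))
      = ent p (fun m => ((F (T m) (V m), C m), T m)) :=
    ent_congr p (fun w => (w.1.1, (w.1.2, w.2))) (fun w => ((w.1, w.2.1), w.2.2))
      (fun m => rfl) (fun m => rfl)
  unfold cent
  rw [hAssoc, hEnt, ent_pair_of_ind p hp1 hCT]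
  have expand : ∀ s : σ, pr p T s * (ent p (fun m => (F s (V m), C m)) - ent p C)
      = pr p T s * ent p (fun m => (F s (V m), C m)) - pr p T s * ent p C :=
    fun s => mul_sub _ _ _
  rw [Finset.sum_congr rfl fun s _ => expand s, Finset.sum_sub_distrib, ← Finset.sum_mul,
    sum_pr p T, hp1, one_mul]
  ring

lemma cent_const {α γ : Type*} [Fintype α] [Fintype γ] (c0 : α) (C : M → γ) :
    cent p (fun _ => c0) C = 0 := by
  unfold cent
  rw [ent_congr p (f := fun m => (c0, C m)) (g := C) (fun c => (c0, c)) Prod.snd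
    (fun m => rfl) (fun m => rfl), sub_self]

lemma cent_comp_inj {α β γ : Type*} [Fintype α] [Fintype β] [Fintype γ] [Nonempty α]
    {V : M → α} {C : M → γ} (e : α → β) (he : Function.Injective e) :
    cent p (fun m => e (V m)) C = cent p V C := by
  unfold cent
  have h1 : ent p (fun m => (e (V m), C m)) = ent p (fun m => (V m, C m)) :=
    ent_congr p (fun q : α × γ => (e q.1, q.2)) (fun q : β × γ => (Function.invFun e q.1, q.2))
      (fun m => rfl)
      (fun m => show (V m, C m) = (Function.invFun e (e (V m)), C m) by
        rw [Function.leftInverse_invFun he (V m)])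
  rw [h1]

/-- the erasure-channel step: each state `s` either erases everything (entropy 0)
or reveals the input (entropy `cent V C`). -/
lemma cent_erasure {σ χ γ β : Type*} [Fintype σ] [Fintype χ] [Fintype γ] [Fintype β]
    [Nonempty χ]
    (hp1 : ∑ m, p m = 1) (T : M → σ) (V : M → χ) (C : M → γ) (F : σ → χ → β)
    (hind : Ind p T (fun m => (V m, C m)))
    (Bad : σ → Prop) [DecidablePred Bad] (c0 : β)
    (hbadF : ∀ s, Bad s → ∀ x, F s x = c0)
    (hgoodF : ∀ s, ¬ Bad s → Function.Injective (F s)) :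
    cent p (fun m => F (T m) (V m)) (fun m => (C m, T m))
      = (1 - ∑ s ∈ Finset.univ.filter Bad, pr p T s) * cent p V C := by
  rw [cent_split p hp1 T V C F hind]
  have per : ∀ s : σ, pr p T s * cent p (fun m => F s (V m)) C
      = if Bad s then 0 else pr p T s * cent p V C := by
    intro s
    by_cases hs : Bad s
    · rw [if_pos hs]
      have : (fun m => F s (V m)) = (fun _ : M => c0) := funext fun m => hbadF s hs (V m)
      rw [this, cent_const, mul_zero]
    · rw [if_neg hs, cent_comp_inj p (F s) (hgoodF s hs)]
  rw [Finset.sum_congr rfl fun s _ => per s, Finset.sum_ite, Finset.sum_const_zero, zero_add,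
    ← Finset.sum_mul]
  congr 1
  have hsplit := Finset.sum_filter_add_sum_filter_not Finset.univ Bad (fun s => pr p T s)
  have : ∑ s ∈ Finset.univ.filter (fun s => ¬ Bad s), pr p T s
      = 1 - ∑ s ∈ Finset.univ.filter Bad, pr p T s := by
    have htot : ∑ s, pr p T s = 1 := by rw [sum_pr p T, hp1]
    linarith [hsplit, htot]
  rw [← this]

section Core

variable {M 𝒳 𝒰 : Type*} [Fintype M] [Fintype 𝒳] [Fintype 𝒰] [Nonempty 𝒳]
variable {n K : ℕ}

/-- per-slot outputs seen by the users in `𝒥`. -/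
def Yb (𝒥 : Finset (Fin K)) (xf : M → Fin n → 𝒳) (sf : M → Fin n → Fin K → Bool)
    (i : Fin n) (m : M) : {x // x ∈ 𝒥} → Option 𝒳 :=
  fun k => if sf m i k.1 = true then some (xf m i) else none

/-- outputs of the first `j` slots, masked into a full tuple. -/
def mY (𝒥 : Finset (Fin K)) (xf : M → Fin n → 𝒳) (sf : M → Fin n → Fin K → Bool)
    (j : ℕ) (m : M) : Fin n → ({x // x ∈ 𝒥} → Option 𝒳) :=
  fun t => if t.val < j then Yb 𝒥 xf sf t m else fun _ => none

/-- inputs of the first `j` slots, masked. -/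
def mX (dX : 𝒳) (xf : M → Fin n → 𝒳) (j : ℕ) (m : M) : Fin n → 𝒳 :=
  fun t => if t.val < j then xf m t else dX

/-- states of the first `j` slots, masked. -/
def mS (sf : M → Fin n → Fin K → Bool) (j : ℕ) (m : M) : Fin n → Fin K → Bool :=
  fun t => if t.val < j then sf m t else fun _ => false


lemma step_lemma (p : M → ℝ) (hp1 : ∑ m, p m = 1)
    (u : M → 𝒰) (xf : M → Fin n → 𝒳) (sf : M → Fin n → Fin K → Bool)
    (𝒥 : Finset (Fin K)) (δJ : ℝ) (dX : 𝒳)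
    (hindpast : ∀ i : Fin n, Ind p (fun m => sf m i)
      (fun m => (u m, mX dX xf (i.val + 1) m, mS sf i.val m)))
    (hbad : ∀ i : Fin n,
      ∑ s ∈ Finset.univ.filter (fun s : Fin K → Bool => ∀ k ∈ 𝒥, s k = false),
        pr p (fun m => sf m i) s = δJ)
    (i : Fin n) :
    ent p (fun m => (mY 𝒥 xf sf (i.val + 1) m, (u m, sf m)))
      - ent p (fun m => (mY 𝒥 xf sf i.val m, (u m, sf m)))
    = (1 - δJ) * cent p (fun m => xf m i)
        (fun m => ((fun q : {x // x ∈ 𝒥} × Fin i.val =>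
            if sf m (Fin.castLE i.isLt.le q.2) q.1.1 = true
            then some (xf m (Fin.castLE i.isLt.le q.2)) else none),
          u m, fun t : Fin i.val => sf m (Fin.castLE i.isLt.le t))) := by
  classical
  have hin : i.val < n := i.isLt
  -- D1 : identify the increment as a conditional entropy of the slot-i output
  have D1 : ent p (fun m => (mY 𝒥 xf sf (i.val + 1) m, (u m, sf m)))
      = ent p (fun m => (Yb 𝒥 xf sf i m, (mY 𝒥 xf sf i.val m, (u m, sf m)))) := by
    refine ent_congr p
      (e := fun w : ({x // x ∈ 𝒥} → Option 𝒳) ×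
          ((Fin n → ({x // x ∈ 𝒥} → Option 𝒳)) × (𝒰 × (Fin n → Fin K → Bool))) =>
        ((fun t : Fin n => if t.val = i.val then w.1 else w.2.1 t), w.2.2))
      (e' := fun w : (Fin n → ({x // x ∈ 𝒥} → Option 𝒳)) × (𝒰 × (Fin n → Fin K → Bool)) =>
        (w.1 i, ((fun t : Fin n => if t.val < i.val then w.1 t else fun _ => none), w.2)))
      ?_ ?_
    · intro m
      refine Prod.ext ?_ rfl
      funext t
      show mY 𝒥 xf sf (i.val + 1) m t = _
      simp only [mY]
      by_cases htl : t.val = i.val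
      · have hti : t = i := Fin.ext htl
        rw [if_pos htl, if_pos (by omega : t.val < i.val + 1), hti]
      · rw [if_neg htl]
        by_cases htj : t.val < i.val
        · rw [if_pos htj, if_pos (by omega : t.val < i.val + 1)]
        · rw [if_neg htj, if_neg (by omega : ¬ t.val < i.val + 1)]
    · intro m
      refine Prod.ext ?_ (Prod.ext ?_ rfl)
      · show Yb 𝒥 xf sf i m = mY 𝒥 xf sf (i.val + 1) m i
        simp only [mY]
        rw [if_pos (by omega : i.val < i.val + 1)]
      · funext t
        show mY 𝒥 xf sf i.val m t = _
        simp only [mY]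
        by_cases htj : t.val < i.val
        · rw [if_pos htj, if_pos htj, if_pos (by omega : t.val < i.val + 1)]
        · rw [if_neg htj, if_neg htj]
  -- the future states, and independence of the future from everything at time i
  have hfut : ∀ l : ℕ,
      Ind p (fun m => (fun t : Fin n =>
          if i.val < t.val ∧ t.val < l then sf m t else (fun _ : Fin K => false)))
        (fun m => (u m, mX dX xf (i.val + 1) m, mS sf (i.val + 1) m)) := by
    intro l
    induction l with
    | zero =>
      have h0 : (fun m : M => (fun t : Fin n =>
            if i.val < t.val ∧ t.val < 0 then sf m t else (fun _ : Fin K => false)))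
          = (fun _ : M => (fun _ : Fin n => (fun _ : Fin K => false))) := by
        funext m t
        rw [if_neg (by omega)]
      rw [h0]
      exact ind_const p hp1 _ _
    | succ l ih =>
      by_cases hln : l < n
      swap
      · -- masks for l and l+1 agree beyond n
        have heq : (fun m : M => (fun t : Fin n =>
              if i.val < t.val ∧ t.val < l + 1 then sf m t else (fun _ : Fin K => false)))
            = (fun m : M => (fun t : Fin n =>
              if i.val < t.val ∧ t.val < l then sf m t else (fun _ : Fin K => false))) := by
          funext m t
          have htn : t.val < n := t.isLt
          by_cases h1 : i.val < t.val ∧ t.val < l + 1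
          · rw [if_pos h1, if_pos ⟨h1.1, by omega⟩]
          · rw [if_neg h1, if_neg (fun hc => h1 ⟨hc.1, by omega⟩)]
        rw [heq]
        exact ih
      by_cases hlj : l ≤ i.val
      · -- nothing new is added
        have heq : (fun m : M => (fun t : Fin n =>
              if i.val < t.val ∧ t.val < l + 1 then sf m t else (fun _ : Fin K => false)))
            = (fun m : M => (fun t : Fin n =>
              if i.val < t.val ∧ t.val < l then sf m t else (fun _ : Fin K => false))) := by
          funext m t
          by_cases h1 : i.val < t.val ∧ t.val < l + 1
          · exact absurd h1 (by omega)
          · rw [if_neg h1, if_neg (fun hc => h1 ⟨hc.1, by omega⟩)]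
        rw [heq]
        exact ih
      · push_neg at hlj
        have h1 := hindpast ⟨l, hln⟩
        have h2 : Ind p (fun m => sf m (⟨l, hln⟩ : Fin n))
            (fun m => ((fun t : Fin n =>
                if i.val < t.val ∧ t.val < l then sf m t else (fun _ : Fin K => false)),
              (u m, mX dX xf (i.val + 1) m, mS sf (i.val + 1) m))) := by
          have h3 := ind_comp_right p h1
            (fun w : 𝒰 × (Fin n → 𝒳) × (Fin n → Fin K → Bool) =>
              ((fun t : Fin n => if i.val < t.val ∧ t.val < l then w.2.2 t
                  else (fun _ : Fin K => false)),
               (w.1, (fun t : Fin n => if t.val < i.val + 1 then w.2.1 t else dX),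
                (fun t : Fin n => if t.val < i.val + 1 then w.2.2 t
                  else (fun _ : Fin K => false)))))
          refine ind_congr p (fun m => rfl) (fun m => ?_) h3
          refine Prod.ext ?_ (Prod.ext rfl (Prod.ext ?_ ?_))
          · funext t
            show (if i.val < t.val ∧ t.val < l then mS sf l m t
                else (fun _ : Fin K => false))
              = (if i.val < t.val ∧ t.val < l then sf m t else (fun _ : Fin K => false))
            by_cases hc : i.val < t.val ∧ t.val < l
            · rw [if_pos hc, if_pos hc]
              show mS sf l m t = sf m t
              simp only [mS]
              rw [if_pos hc.2]
            · rw [if_neg hc, if_neg hc]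
          · funext t
            show (if t.val < i.val + 1 then mX dX xf (l + 1) m t else dX)
                = mX dX xf (i.val + 1) m t
            simp only [mX]
            by_cases hc : t.val < i.val + 1
            · rw [if_pos hc, if_pos (by omega : t.val < l + 1), if_pos hc]
            · rw [if_neg hc, if_neg hc]
          · funext t
            show (if t.val < i.val + 1 then mS sf l m t else (fun _ : Fin K => false))
                = mS sf (i.val + 1) m t
            simp only [mS]
            by_cases hc : t.val < i.val + 1
            · rw [if_pos hc, if_pos (by omega : t.val < l), if_pos hc]
            · rw [if_neg hc, if_neg hc]
        have h4 := ind_pair p hp1 ih h2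
        have h5 := ind_comp_left p h4
          (fun w : (Fin n → Fin K → Bool) × (Fin K → Bool) =>
            (fun t : Fin n => if t.val = l then w.2 else w.1 t))
        refine ind_congr p (fun m => ?_) (fun m => rfl) h5
        funext t
        show (if t.val = l then sf m (⟨l, hln⟩ : Fin n) else
            (if i.val < t.val ∧ t.val < l then sf m t else (fun _ : Fin K => false)))
          = (if i.val < t.val ∧ t.val < l + 1 then sf m t else (fun _ : Fin K => false))
        by_cases htl : t.val = l
        · have hti : t = (⟨l, hln⟩ : Fin n) := Fin.ext htl
          rw [if_pos htl, if_pos (show i.val < t.val ∧ t.val < l + 1 by omega), hti]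
        · rw [if_neg htl]
          by_cases hc : i.val < t.val ∧ t.val < l
          · rw [if_pos hc, if_pos ⟨hc.1, by omega⟩]
          · rw [if_neg hc, if_neg (fun hcc => hc ⟨hcc.1, by omega⟩)]
  -- the independent future, in the exact shape needed
  have hindD : Ind p
      (fun m => (fun t : Fin n => if i.val < t.val then sf m t else (fun _ : Fin K => false)))
      (fun m => (Yb 𝒥 xf sf i m, (mY 𝒥 xf sf i.val m, (u m, mS sf (i.val + 1) m)))) := by
    have hD0 : Ind p
        (fun m => (fun t : Fin n => if i.val < t.val then sf m t else (fun _ : Fin K => false)))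
        (fun m => (u m, mX dX xf (i.val + 1) m, mS sf (i.val + 1) m)) := by
      refine ind_congr p (fun m => ?_) (fun m => rfl) (hfut n)
      funext t
      by_cases hc : i.val < t.val
      · rw [if_pos ⟨hc, t.isLt⟩, if_pos hc]
      · rw [if_neg (fun hcc => hc hcc.1), if_neg hc]
    have h3 := ind_comp_right p hD0
      (fun w : 𝒰 × (Fin n → 𝒳) × (Fin n → Fin K → Bool) =>
        ((fun k : {x // x ∈ 𝒥} => if w.2.2 i k.1 = true then some (w.2.1 i) else none),
         ((fun t : Fin n => if t.val < i.val then
              (fun k : {x // x ∈ 𝒥} => if w.2.2 t k.1 = true then some (w.2.1 t) else none)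
            else fun _ => none),
          (w.1, w.2.2))))
    refine ind_congr p (fun m => rfl) (fun m => ?_) h3
    refine Prod.ext ?_ (Prod.ext ?_ rfl)
    · show (fun k : {x // x ∈ 𝒥} =>
          if mS sf (i.val + 1) m i k.1 = true then some (mX dX xf (i.val + 1) m i) else none)
        = Yb 𝒥 xf sf i m
      have hs : mS sf (i.val + 1) m i = sf m i := by
        simp only [mS]; rw [if_pos (by omega : i.val < i.val + 1)]
      have hx : mX dX xf (i.val + 1) m i = xf m i := by
        simp only [mX]; rw [if_pos (by omega : i.val < i.val + 1)]
      rw [hs, hx]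
      rfl
    · funext t
      show (if t.val < i.val then
          (fun k : {x // x ∈ 𝒥} =>
            if mS sf (i.val + 1) m t k.1 = true then some (mX dX xf (i.val + 1) m t) else none)
          else fun _ => none) = mY 𝒥 xf sf i.val m t
      simp only [mY]
      by_cases htj : t.val < i.val
      · have hs : mS sf (i.val + 1) m t = sf m t := by
          simp only [mS]; rw [if_pos (by omega : t.val < i.val + 1)]
        have hx : mX dX xf (i.val + 1) m t = xf m t := by
          simp only [mX]; rw [if_pos (by omega : t.val < i.val + 1)]
        rw [if_pos htj, if_pos htj, hs, hx]
        rfl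
      · rw [if_neg htj, if_neg htj]
  -- D3 : reorganize the conditioning and drop the independent future
  have D3 : cent p (Yb 𝒥 xf sf i) (fun m => (mY 𝒥 xf sf i.val m, (u m, sf m)))
      = cent p (Yb 𝒥 xf sf i) (fun m => (mY 𝒥 xf sf i.val m, (u m, mS sf (i.val + 1) m))) := by
    have hrec : cent p (Yb 𝒥 xf sf i) (fun m => (mY 𝒥 xf sf i.val m, (u m, sf m)))
        = cent p (Yb 𝒥 xf sf i)
          (fun m => ((mY 𝒥 xf sf i.val m, (u m, mS sf (i.val + 1) m)),
            (fun t : Fin n => if i.val < t.val then sf m t else (fun _ : Fin K => false)))) := by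
      refine cent_congr_right p
        (e := fun w : ((Fin n → ({x // x ∈ 𝒥} → Option 𝒳)) × (𝒰 × (Fin n → Fin K → Bool)))
            × (Fin n → Fin K → Bool) =>
          (w.1.1, (w.1.2.1, fun t : Fin n =>
            if t.val < i.val + 1 then w.1.2.2 t else w.2 t)))
        (e' := fun w : (Fin n → ({x // x ∈ 𝒥} → Option 𝒳)) × (𝒰 × (Fin n → Fin K → Bool)) =>
          ((w.1, (w.2.1, fun t : Fin n =>
              if t.val < i.val + 1 then w.2.2 t else (fun _ : Fin K => false))),
            (fun t : Fin n => if i.val < t.val then w.2.2 t else (fun _ : Fin K => false))))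
        ?_ ?_
      · intro m
        refine Prod.ext rfl (Prod.ext rfl ?_)
        funext t
        show sf m t = (if t.val < i.val + 1 then mS sf (i.val + 1) m t else
          (if i.val < t.val then sf m t else (fun _ : Fin K => false)))
        by_cases hc : t.val < i.val + 1
        · rw [if_pos hc]
          show sf m t = mS sf (i.val + 1) m t
          simp only [mS]; rw [if_pos hc]
        · rw [if_neg hc, if_pos (by omega : i.val < t.val)]
      · intro m
        rfl
    rw [hrec]
    exact cent_drop p hp1 hindD
  -- D5 : split off the slot-i state from the conditioning
  have D5 : cent p (Yb 𝒥 xf sf i)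
        (fun m => (mY 𝒥 xf sf i.val m, (u m, mS sf (i.val + 1) m)))
      = cent p (Yb 𝒥 xf sf i)
        (fun m => ((mY 𝒥 xf sf i.val m, (u m, mS sf i.val m)), sf m i)) := by
    refine cent_congr_right p
      (e := fun w : ((Fin n → ({x // x ∈ 𝒥} → Option 𝒳)) × (𝒰 × (Fin n → Fin K → Bool)))
          × (Fin K → Bool) =>
        (w.1.1, (w.1.2.1, fun t : Fin n => if t.val = i.val then w.2 else w.1.2.2 t)))
      (e' := fun w : (Fin n → ({x // x ∈ 𝒥} → Option 𝒳)) × (𝒰 × (Fin n → Fin K → Bool)) =>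
        ((w.1, (w.2.1, fun t : Fin n =>
            if t.val < i.val then w.2.2 t else (fun _ : Fin K => false))),
          w.2.2 i))
      ?_ ?_
    · intro m
      refine Prod.ext rfl (Prod.ext rfl ?_)
      funext t
      show mS sf (i.val + 1) m t = (if t.val = i.val then sf m i else mS sf i.val m t)
      simp only [mS]
      by_cases htl : t.val = i.val
      · have hti : t = i := Fin.ext htl
        rw [if_pos htl, if_pos (by omega : t.val < i.val + 1), hti]
      · rw [if_neg htl]
        by_cases htj : t.val < i.val
        · rw [if_pos htj, if_pos (by omega : t.val < i.val + 1)]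
        · rw [if_neg htj, if_neg (by omega : ¬ t.val < i.val + 1)]
    · intro m
      refine Prod.ext (Prod.ext rfl (Prod.ext rfl ?_)) ?_
      · funext t
        show mS sf i.val m t = (if t.val < i.val then mS sf (i.val + 1) m t
          else (fun _ : Fin K => false))
        simp only [mS]
        by_cases htj : t.val < i.val
        · rw [if_pos htj, if_pos htj, if_pos (by omega : t.val < i.val + 1)]
        · rw [if_neg htj, if_neg htj]
      · show sf m i = mS sf (i.val + 1) m i
        simp only [mS]
        rw [if_pos (by omega : i.val < i.val + 1)]
  -- independence of the state from input and past, for the erasure step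
  have hindVC : Ind p (fun m => sf m i)
      (fun m => (xf m i, (mY 𝒥 xf sf i.val m, (u m, mS sf i.val m)))) := by
    have h3 := ind_comp_right p (hindpast i)
      (fun w : 𝒰 × (Fin n → 𝒳) × (Fin n → Fin K → Bool) =>
        (w.2.1 i, ((fun t : Fin n => if t.val < i.val then
            (fun k : {x // x ∈ 𝒥} => if w.2.2 t k.1 = true then some (w.2.1 t) else none)
          else fun _ => none),
          (w.1, w.2.2))))
    refine ind_congr p (fun m => rfl) (fun m => ?_) h3
    refine Prod.ext ?_ (Prod.ext ?_ rfl)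
    · show mX dX xf (i.val + 1) m i = xf m i
      simp only [mX]
      rw [if_pos (by omega : i.val < i.val + 1)]
    · funext t
      show (if t.val < i.val then
          (fun k : {x // x ∈ 𝒥} =>
            if mS sf i.val m t k.1 = true then some (mX dX xf (i.val + 1) m t) else none)
          else fun _ => none) = mY 𝒥 xf sf i.val m t
      simp only [mY]
      by_cases htj : t.val < i.val
      · have hs : mS sf i.val m t = sf m t := by
          simp only [mS]; rw [if_pos htj]
        have hx : mX dX xf (i.val + 1) m t = xf m t := by
          simp only [mX]; rw [if_pos (by omega : t.val < i.val + 1)]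
        rw [if_pos htj, if_pos htj, hs, hx]
        rfl
      · rw [if_neg htj, if_neg htj]
  -- D6 : the erasure computation
  have hD6 := cent_erasure p hp1 (fun m => sf m i) (fun m => xf m i)
    (fun m => (mY 𝒥 xf sf i.val m, (u m, mS sf i.val m)))
    (fun s x => fun k : {x // x ∈ 𝒥} => if s k.1 = true then some x else none)
    hindVC
    (Bad := fun s : Fin K → Bool => ∀ k ∈ 𝒥, s k = false)
    (c0 := fun _ => none)
    (fun s hs x => funext fun k => by simp [hs k.1 k.2])
    (fun s hs x x' hxx => by
      have hs' : ∃ k, k ∈ 𝒥 ∧ s k ≠ false := by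
        by_contra hc
        push_neg at hc
        exact hs (fun k hk => hc k hk)
      obtain ⟨k0, hk0, hs0⟩ := hs'
      simpa [Bool.ne_false_iff.mp hs0] using congrFun hxx ⟨k0, hk0⟩)
  rw [hbad i] at hD6
  -- D7 : recode the conditioning into the restricted form of the statement
  have D7 : cent p (fun m => xf m i)
        (fun m => (mY 𝒥 xf sf i.val m, (u m, mS sf i.val m)))
      = cent p (fun m => xf m i)
        (fun m => ((fun q : {x // x ∈ 𝒥} × Fin i.val =>
            if sf m (Fin.castLE i.isLt.le q.2) q.1.1 = true
            then some (xf m (Fin.castLE i.isLt.le q.2)) else none),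
          u m, fun t : Fin i.val => sf m (Fin.castLE i.isLt.le t))) := by
    refine cent_congr_right p
      (e := fun w : ({x // x ∈ 𝒥} × Fin i.val → Option 𝒳)
          × (𝒰 × (Fin i.val → Fin K → Bool)) =>
        ((fun t : Fin n => if h2 : t.val < i.val then
            (fun k : {x // x ∈ 𝒥} => w.1 (k, ⟨t.val, h2⟩)) else fun _ => none),
          (w.2.1, fun t : Fin n => if h2 : t.val < i.val then w.2.2 ⟨t.val, h2⟩
            else (fun _ : Fin K => false))))
      (e' := fun w : (Fin n → ({x // x ∈ 𝒥} → Option 𝒳)) × (𝒰 × (Fin n → Fin K → Bool)) =>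
        ((fun q : {x // x ∈ 𝒥} × Fin i.val => w.1 (Fin.castLE i.isLt.le q.2) q.1),
          (w.2.1, fun t : Fin i.val => w.2.2 (Fin.castLE i.isLt.le t))))
      ?_ ?_
    · intro m
      refine Prod.ext ?_ (Prod.ext rfl ?_)
      · funext t
        show mY 𝒥 xf sf i.val m t = _
        simp only [mY]
        by_cases htj : t.val < i.val
        · rw [if_pos htj, dif_pos htj]
          funext k
          have hct : Fin.castLE i.isLt.le (⟨t.val, htj⟩ : Fin i.val) = t := Fin.ext rfl
          rw [hct]
          rfl
        · rw [if_neg htj, dif_neg htj]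
      · funext t
        show mS sf i.val m t = _
        simp only [mS]
        by_cases htj : t.val < i.val
        · rw [if_pos htj, dif_pos htj]
          have hct : Fin.castLE i.isLt.le (⟨t.val, htj⟩ : Fin i.val) = t := Fin.ext rfl
          rw [hct]
        · rw [if_neg htj, dif_neg htj]
    · intro m
      refine Prod.ext ?_ (Prod.ext rfl ?_)
      · funext q
        show (if sf m (Fin.castLE i.isLt.le q.2) q.1.1 = true
            then some (xf m (Fin.castLE i.isLt.le q.2)) else none)
          = mY 𝒥 xf sf i.val m (Fin.castLE i.isLt.le q.2) q.1
        simp only [mY]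
        rw [if_pos (show (Fin.castLE i.isLt.le q.2).val < i.val from q.2.isLt)]
        rfl
      · funext t
        show sf m (Fin.castLE i.isLt.le t) = mS sf i.val m (Fin.castLE i.isLt.le t)
        simp only [mS]
        rw [if_pos (show (Fin.castLE i.isLt.le t).val < i.val from t.isLt)]
  -- assemble
  calc ent p (fun m => (mY 𝒥 xf sf (i.val + 1) m, (u m, sf m)))
        - ent p (fun m => (mY 𝒥 xf sf i.val m, (u m, sf m)))
      = cent p (Yb 𝒥 xf sf i) (fun m => (mY 𝒥 xf sf i.val m, (u m, sf m))) := by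
        rw [D1]; rfl
    _ = cent p (Yb 𝒥 xf sf i)
          (fun m => (mY 𝒥 xf sf i.val m, (u m, mS sf (i.val + 1) m))) := D3
    _ = cent p (Yb 𝒥 xf sf i)
          (fun m => ((mY 𝒥 xf sf i.val m, (u m, mS sf i.val m)), sf m i)) := D5
    _ = (1 - δJ) * cent p (fun m => xf m i)
          (fun m => (mY 𝒥 xf sf i.val m, (u m, mS sf i.val m))) := hD6
    _ = _ := by rw [D7]

lemma core (p : M → ℝ) (hp1 : ∑ m, p m = 1)
    (u : M → 𝒰) (xf : M → Fin n → 𝒳) (sf : M → Fin n → Fin K → Bool)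
    (𝒥 : Finset (Fin K)) (δJ : ℝ) (dX : 𝒳)
    (hindpast : ∀ i : Fin n, Ind p (fun m => sf m i)
      (fun m => (u m, mX dX xf (i.val + 1) m, mS sf i.val m)))
    (hbad : ∀ i : Fin n,
      ∑ s ∈ Finset.univ.filter (fun s : Fin K → Bool => ∀ k ∈ 𝒥, s k = false),
        pr p (fun m => sf m i) s = δJ) :
    cent p (fun m => fun q : {x // x ∈ 𝒥} × Fin n =>
        if sf m q.2 q.1.1 = true then some (xf m q.2) else none)
      (fun m => (u m, sf m))
    = (1 - δJ) * ∑ i : Fin n,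
        cent p (fun m => xf m i)
          (fun m => ((fun q : {x // x ∈ 𝒥} × Fin i.val =>
              if sf m (Fin.castLE i.isLt.le q.2) q.1.1 = true
              then some (xf m (Fin.castLE i.isLt.le q.2)) else none),
            u m, fun t : Fin i.val => sf m (Fin.castLE i.isLt.le t))) := by
  classical
  -- the telescoping entropies
  set hent : ℕ → ℝ := fun j => ent p (fun m => (mY 𝒥 xf sf j m, u m, sf m)) with hhent
  -- ℕ-indexed version of the right-hand summands
  set G : ℕ → ℝ := fun j =>
    if h : j < n then
      cent p (fun m => xf m (⟨j, h⟩ : Fin n))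
        (fun m => ((fun q : {x // x ∈ 𝒥} × Fin ((⟨j, h⟩ : Fin n) : Fin n).val =>
            if sf m (Fin.castLE (⟨j, h⟩ : Fin n).isLt.le q.2) q.1.1 = true
            then some (xf m (Fin.castLE (⟨j, h⟩ : Fin n).isLt.le q.2)) else none),
          u m, fun t : Fin ((⟨j, h⟩ : Fin n) : Fin n).val =>
            sf m (Fin.castLE (⟨j, h⟩ : Fin n).isLt.le t)))
    else 0 with hG
  -- Step A : recode the global output tuple
  have stepA : ent p (fun m => ((fun q : {x // x ∈ 𝒥} × Fin n =>
        if sf m q.2 q.1.1 = true then some (xf m q.2) else none), (u m, sf m)))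
      = hent n := by
    refine ent_congr p
      (e := fun w : (Fin n → ({x // x ∈ 𝒥} → Option 𝒳)) × (𝒰 × (Fin n → Fin K → Bool)) =>
        ((fun q : {x // x ∈ 𝒥} × Fin n => w.1 q.2 q.1), w.2))
      (e' := fun w : ({x // x ∈ 𝒥} × Fin n → Option 𝒳) × (𝒰 × (Fin n → Fin K → Bool)) =>
        ((fun t k => w.1 (k, t)), w.2)) ?_ ?_
    · intro m
      refine Prod.ext ?_ rfl
      funext q
      simp [mY, Yb, q.2.isLt]
    · intro m
      refine Prod.ext ?_ rfl
      funext t k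
      simp [mY, Yb, t.isLt]
  -- Step B : base case
  have stepB : hent 0 = ent p (fun m => (u m, sf m)) := by
    refine ent_congr p
      (e := fun w : 𝒰 × (Fin n → Fin K → Bool) =>
        ((fun _ : Fin n => (fun _ : {x // x ∈ 𝒥} => (none : Option 𝒳))), w))
      (e' := Prod.snd) ?_ ?_
    · intro m
      refine Prod.ext ?_ rfl
      funext t
      simp [mY]
    · intro m
      rfl
  -- sum over `Fin n` versus sum over `range n`
  have hsum : ∑ i : Fin n,
      cent p (fun m => xf m i)
        (fun m => ((fun q : {x // x ∈ 𝒥} × Fin i.val =>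
            if sf m (Fin.castLE i.isLt.le q.2) q.1.1 = true
            then some (xf m (Fin.castLE i.isLt.le q.2)) else none),
          u m, fun t : Fin i.val => sf m (Fin.castLE i.isLt.le t)))
      = ∑ j ∈ Finset.range n, G j := by
    rw [← Fin.sum_univ_eq_sum_range G n]
    refine Finset.sum_congr rfl fun i _ => ?_
    simp only [hG]
    rw [dif_pos i.isLt]
  calc cent p (fun m => fun q : {x // x ∈ 𝒥} × Fin n =>
        if sf m q.2 q.1.1 = true then some (xf m q.2) else none) (fun m => (u m, sf m))
      = hent n - hent 0 := by
        show ent p (fun m => ((fun q : {x // x ∈ 𝒥} × Fin n =>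
            if sf m q.2 q.1.1 = true then some (xf m q.2) else none), (u m, sf m)))
          - ent p (fun m => (u m, sf m)) = hent n - hent 0
        rw [stepA, stepB]
    _ = ∑ j ∈ Finset.range n, (hent (j + 1) - hent j) := (Finset.sum_range_sub hent n).symm
    _ = ∑ j ∈ Finset.range n, ((1 - δJ) * G j) := by
        refine Finset.sum_congr rfl fun j hj => ?_
        have hjn : j < n := Finset.mem_range.mp hj
        simp only [hhent, hG]
        rw [dif_pos hjn]
        exact step_lemma p hp1 u xf sf 𝒥 δJ dX hindpast hbad ⟨j, hjn⟩
    _ = (1 - δJ) * ∑ j ∈ Finset.range n, G j := by rw [Finset.mul_sum]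
    _ = _ := by rw [← hsum]

end Core

section Bridge

variable {Ω : Type*} [MeasurableSpace Ω] (μ : MeasureTheory.Measure Ω)
  [MeasureTheory.IsProbabilityMeasure μ]
variable {Mt : Type*} [Fintype Mt] [MeasurableSpace Mt] [MeasurableSingletonClass Mt]
variable (master : Ω → Mt)

lemma pr_bridge (hm : Measurable master) {β : Type*} (f : Mt → β) (y : β) :
    pr (fun m => (μ (master ⁻¹' {m})).toReal) f y
      = (μ ((fun ω => f (master ω)) ⁻¹' {y})).toReal := by
  classical
  have hset : ((fun ω => f (master ω)) ⁻¹' {y})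
      = master ⁻¹' ↑(Finset.univ.filter (fun m => f m = y)) := by
    ext ω; simp
  rw [hset, ← MeasureTheory.sum_measure_preimage_singleton _
    (fun m _ => hm (MeasurableSet.singleton m)),
    ENNReal.toReal_sum (fun m _ => MeasureTheory.measure_ne_top μ _)]
  unfold pr
  rw [Finset.sum_filter]
  refine Finset.sum_congr rfl fun m _ => ?_
  by_cases h : f m = y
  · rw [ind01_pos h, if_pos h]
  · rw [ind01_neg h, if_neg h]

lemma sum_p_bridge (hm : Measurable master) : ∑ m, (μ (master ⁻¹' {m})).toReal = 1 := by
  rw [← ENNReal.toReal_sum (fun m _ => MeasureTheory.measure_ne_top μ _),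
    MeasureTheory.sum_measure_preimage_singleton _
      (fun m _ => hm (MeasurableSet.singleton m))]
  rw [Finset.coe_univ, Set.preimage_univ]
  simp

lemma ent_bridge (hm : Measurable master) {β : Type*} [Fintype β] (f : Mt → β) :
    ent (fun m => (μ (master ⁻¹' {m})).toReal) f = entropy μ (fun ω => f (master ω)) := by
  unfold ent entropy
  exact Finset.sum_congr rfl fun y _ => by rw [pr_bridge μ master hm f y]

lemma cent_bridge (hm : Measurable master) {α β : Type*} [Fintype α] [Fintype β] (f : Mt → α) (g : Mt → β) :
    cent (fun m => (μ (master ⁻¹' {m})).toReal) f g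
      = condEntropy μ (fun ω => f (master ω)) (fun ω => g (master ω)) := by
  unfold cent condEntropy
  exact congrArg₂ (fun a b => a - b)
    (ent_bridge μ master hm (fun m => (f m, g m)))
    (ent_bridge μ master hm g)

lemma ind_bridge (hm : Measurable master) {β γ : Type*} [MeasurableSpace β] [MeasurableSpace γ]
    (f : Mt → β) (g : Mt → γ)
    (h : ProbabilityTheory.IndepFun (fun ω => f (master ω)) (fun ω => g (master ω)) μ)
    [MeasurableSingletonClass β] [MeasurableSingletonClass γ] :
    Ind (fun m => (μ (master ⁻¹' {m})).toReal) f g := by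
  intro a b
  have h1 := (ProbabilityTheory.indepFun_iff_measure_inter_preimage_eq_mul.mp h)
    {a} {b} (MeasurableSet.singleton a) (MeasurableSet.singleton b)
  have hev : ((fun ω => (f (master ω), g (master ω))) ⁻¹' {(a, b)})
      = ((fun ω => f (master ω)) ⁻¹' {a}) ∩ ((fun ω => g (master ω)) ⁻¹' {b}) := by
    ext ω; simp [Prod.ext_iff]
  calc pr (fun m => (μ (master ⁻¹' {m})).toReal) (fun m => (f m, g m)) (a, b)
      = (μ ((fun ω => (f (master ω), g (master ω))) ⁻¹' {(a, b)})).toReal :=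
        pr_bridge μ master hm (fun m => (f m, g m)) (a, b)
    _ = (μ (((fun ω => f (master ω)) ⁻¹' {a}) ∩ ((fun ω => g (master ω)) ⁻¹' {b}))).toReal := by
        rw [hev]
    _ = (μ ((fun ω => f (master ω)) ⁻¹' {a}) * μ ((fun ω => g (master ω)) ⁻¹' {b})).toReal := by
        rw [h1]
    _ = (μ ((fun ω => f (master ω)) ⁻¹' {a})).toReal
          * (μ ((fun ω => g (master ω)) ⁻¹' {b})).toReal := ENNReal.toReal_mul
    _ = _ := by rw [pr_bridge μ master hm f a, pr_bridge μ master hm g b]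

end Bridge

end ErasureAux


set_option maxHeartbeats 1000000

open ErasureAux

/-- Per-set conditional-entropy identity from the proof of
Lemma 1 of the paper: for every nonempty `𝒥 ⊆ {1,…,K}`,
`H[(Y_{k,i})_{k∈𝒥,i≤n} | U, S^n]
  = (1-∏_{k∈𝒥} δ_k) Σ_{i=1}^n H[X_i | (Y_{k,t})_{k∈𝒥,t≤i-1}, U, S^{i-1}]`. -/
theorem erasure_channel_condEntropy_identity
    {Ω : Type*} [MeasurableSpace Ω] (μ : Measure Ω) [IsProbabilityMeasure μ]
    (n K : ℕ) (hn : 1 ≤ n) (hK : 1 ≤ K)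
    {𝒳 𝒰 : Type*} [Fintype 𝒳] [Nonempty 𝒳] [MeasurableSpace 𝒳]
    [MeasurableSingletonClass 𝒳] [Fintype 𝒰] [Nonempty 𝒰] [MeasurableSpace 𝒰]
    [MeasurableSingletonClass 𝒰]
    (U : Ω → 𝒰) (X : Fin n → Ω → 𝒳) (S : Fin n → Ω → (Fin K → Bool))
    (hU : Measurable U) (hX : ∀ i, Measurable (X i)) (hS : ∀ i, Measurable (S i))
    (δ : Fin K → ℝ) (hδ0 : ∀ k, 0 ≤ δ k) (hδ1 : ∀ k, δ k < 1)
    -- (i) marginal erasure probabilities and independence across users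
    (hmarg : ∀ (i : Fin n) (k : Fin K), μ {ω | S i ω k = false} = ENNReal.ofReal (δ k))
    (husers : ∀ i : Fin n, iIndepFun
      (fun k ω => S i ω k) μ)
    -- (ii) the state in slot i is independent of (U, X_1,…,X_i, S_1,…,S_{i-1})
    (hpast : ∀ i : Fin n, IndepFun (S i)
      (fun ω => (U ω, fun t : Fin (i.val + 1) => X (Fin.castLE i.isLt t) ω,
        fun t : Fin i.val => S (Fin.castLE i.isLt.le t) ω)) μ)
    -- channel outputs
    (Y : Fin K → Fin n → Ω → Option 𝒳)
    (hY : ∀ k i ω, Y k i ω = if S i ω k = true then some (X i ω) else none) :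
    ∀ 𝒥 : Finset (Fin K), 𝒥.Nonempty →
      condEntropy μ (fun ω => fun q : {x // x ∈ 𝒥} × Fin n => Y q.1.1 q.2 ω)
          (fun ω => (U ω, fun i : Fin n => S i ω))
        = (1 - ∏ k ∈ 𝒥, δ k) *
            ∑ i : Fin n,
              condEntropy μ (X i)
                (fun ω =>
                  ((fun q : {x // x ∈ 𝒥} × Fin i.val =>
                      Y q.1.1 (Fin.castLE i.isLt.le q.2) ω),
                   U ω,
                   (fun t : Fin i.val => S (Fin.castLE i.isLt.le t) ω))) := by
  intro 𝒥 h𝒥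
  classical
  -- the master random variable
  let master : Ω → 𝒰 × (Fin n → 𝒳) × (Fin n → Fin K → Bool) :=
    fun ω => (U ω, fun i => X i ω, fun i => S i ω)
  have hmaster : Measurable master :=
    hU.prodMk ((measurable_pi_lambda _ fun i => hX i).prodMk
      (measurable_pi_lambda _ fun i => hS i))
  let P : (𝒰 × (Fin n → 𝒳) × (Fin n → Fin K → Bool)) → ℝ :=
    fun m => (μ (master ⁻¹' {m})).toReal
  have hp1 : ∑ m, P m = 1 := sum_p_bridge μ master hmaster
  have dX : 𝒳 := Classical.arbitrary 𝒳
  -- bridge the independence-from-the-past hypothesis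
  have hindpastP : ∀ i : Fin n, Ind P (fun m => m.2.2 i)
      (fun m => (m.1, mX dX (fun m => m.2.1) (i.val + 1) m,
        mS (fun m => m.2.2) i.val m)) := by
    intro i
    have h0 : Ind P (fun m : 𝒰 × (Fin n → 𝒳) × (Fin n → Fin K → Bool) => m.2.2 i)
        (fun m : 𝒰 × (Fin n → 𝒳) × (Fin n → Fin K → Bool) =>
          (m.1, fun t : Fin (i.val + 1) => m.2.1 (Fin.castLE i.isLt t),
            fun t : Fin i.val => m.2.2 (Fin.castLE i.isLt.le t))) := by
      refine ind_bridge μ master hmaster _ _ ?_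
      exact hpast i
    have h3 := ind_comp_right P h0
      (fun w : 𝒰 × (Fin (i.val + 1) → 𝒳) × (Fin i.val → Fin K → Bool) =>
        (w.1, (fun t : Fin n => if h : t.val < i.val + 1 then w.2.1 ⟨t.val, h⟩ else dX),
          (fun t : Fin n => if h : t.val < i.val then w.2.2 ⟨t.val, h⟩
            else (fun _ : Fin K => false))))
    refine ind_congr P (fun m => rfl) (fun m => ?_) h3
    refine Prod.ext rfl (Prod.ext ?_ ?_)
    · funext t
      show (if h : t.val < i.val + 1 then m.2.1 (Fin.castLE i.isLt ⟨t.val, h⟩) else dX)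
        = mX dX (fun m => m.2.1) (i.val + 1) m t
      simp only [mX]
      by_cases h : t.val < i.val + 1
      · rw [dif_pos h, if_pos h]
        exact congrArg _ (Fin.ext rfl)
      · rw [dif_neg h, if_neg h]
    · funext t
      show (if h : t.val < i.val then m.2.2 (Fin.castLE i.isLt.le ⟨t.val, h⟩)
          else (fun _ : Fin K => false))
        = mS (fun m => m.2.2) i.val m t
      simp only [mS]
      by_cases h : t.val < i.val
      · rw [dif_pos h, if_pos h]
        exact congrArg _ (Fin.ext rfl)
      · rw [dif_neg h, if_neg h]
  -- bridge the erasure probabilities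
  have hbadP : ∀ i : Fin n,
      ∑ s ∈ Finset.univ.filter (fun s : Fin K → Bool => ∀ k ∈ 𝒥, s k = false),
        pr P (fun m => m.2.2 i) s = ∏ k ∈ 𝒥, δ k := by
    intro i
    have h1 : ∀ s : Fin K → Bool, pr P (fun m => m.2.2 i) s = (μ ((S i) ⁻¹' {s})).toReal :=
      fun s => pr_bridge μ master hmaster (fun m => m.2.2 i) s
    rw [Finset.sum_congr rfl fun s _ => h1 s,
      ← ENNReal.toReal_sum (fun s _ => MeasureTheory.measure_ne_top μ _),
      MeasureTheory.sum_measure_preimage_singleton _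
        (fun s _ => (hS i) (MeasurableSet.singleton s))]
    have hset : (S i) ⁻¹' ↑(Finset.univ.filter
          (fun s : Fin K → Bool => ∀ k ∈ 𝒥, s k = false))
        = ⋂ k ∈ 𝒥, (fun ω => S i ω k) ⁻¹' {false} := by
      ext ω
      simp
    rw [hset]
    have h2 := (iIndepFun_iff_measure_inter_preimage_eq_mul.mp (husers i)) 𝒥
      (sets := fun _ => {false}) (fun k _ => MeasurableSet.singleton false)
    rw [h2]
    have h3 : ∀ k ∈ 𝒥, μ ((fun ω => S i ω k) ⁻¹' {false}) = ENNReal.ofReal (δ k) := by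
      intro k _
      rw [show ((fun ω => S i ω k) ⁻¹' {false}) = {ω | S i ω k = false} from by ext ω; simp]
      exact hmarg i k
    rw [Finset.prod_congr rfl h3, ENNReal.toReal_prod]
    exact Finset.prod_congr rfl fun k _ => ENNReal.toReal_ofReal (hδ0 k)
  -- the combinatorial identity
  have hcore := core P hp1 (fun m => m.1) (fun m => m.2.1) (fun m => m.2.2) 𝒥
    (∏ k ∈ 𝒥, δ k) dX hindpastP hbadP
  -- bridge back to the statement: left-hand side
  have hL : condEntropy μ (fun ω => fun q : {x // x ∈ 𝒥} × Fin n => Y q.1.1 q.2 ω)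
      (fun ω => (U ω, fun i : Fin n => S i ω))
      = cent P (fun m => fun q : {x // x ∈ 𝒥} × Fin n =>
          if m.2.2 q.2 q.1.1 = true then some (m.2.1 q.2) else none)
        (fun m => (m.1, m.2.2)) := by
    have h1 : (fun ω => fun q : {x // x ∈ 𝒥} × Fin n => Y q.1.1 q.2 ω)
        = (fun ω => (fun m : 𝒰 × (Fin n → 𝒳) × (Fin n → Fin K → Bool) =>
            fun q : {x // x ∈ 𝒥} × Fin n =>
              if m.2.2 q.2 q.1.1 = true then some (m.2.1 q.2) else none) (master ω)) := by
      funext ω q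
      exact hY q.1.1 q.2 ω
    rw [h1]
    exact (cent_bridge μ master hmaster
      (fun m : 𝒰 × (Fin n → 𝒳) × (Fin n → Fin K → Bool) =>
        fun q : {x // x ∈ 𝒥} × Fin n =>
          if m.2.2 q.2 q.1.1 = true then some (m.2.1 q.2) else none)
      (fun m : 𝒰 × (Fin n → 𝒳) × (Fin n → Fin K → Bool) => (m.1, m.2.2))).symm
  -- bridge back: the right-hand summands
  have hR : ∀ i : Fin n, condEntropy μ (X i)
      (fun ω => ((fun q : {x // x ∈ 𝒥} × Fin i.val =>
          Y q.1.1 (Fin.castLE i.isLt.le q.2) ω),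
        U ω, (fun t : Fin i.val => S (Fin.castLE i.isLt.le t) ω)))
      = cent P (fun m => m.2.1 i)
        (fun m => ((fun q : {x // x ∈ 𝒥} × Fin i.val =>
            if m.2.2 (Fin.castLE i.isLt.le q.2) q.1.1 = true
            then some (m.2.1 (Fin.castLE i.isLt.le q.2)) else none),
          m.1, fun t : Fin i.val => m.2.2 (Fin.castLE i.isLt.le t))) := by
    intro i
    have h1 : (fun ω => ((fun q : {x // x ∈ 𝒥} × Fin i.val =>
          Y q.1.1 (Fin.castLE i.isLt.le q.2) ω),
        U ω, (fun t : Fin i.val => S (Fin.castLE i.isLt.le t) ω)))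
        = (fun ω => (fun m : 𝒰 × (Fin n → 𝒳) × (Fin n → Fin K → Bool) =>
            ((fun q : {x // x ∈ 𝒥} × Fin i.val =>
              if m.2.2 (Fin.castLE i.isLt.le q.2) q.1.1 = true
              then some (m.2.1 (Fin.castLE i.isLt.le q.2)) else none),
            m.1, fun t : Fin i.val => m.2.2 (Fin.castLE i.isLt.le t))) (master ω)) := by
      funext ω
      refine Prod.ext ?_ rfl
      funext q
      exact hY q.1.1 (Fin.castLE i.isLt.le q.2) ω
    rw [h1]
    exact (cent_bridge μ master hmaster
      (fun m : 𝒰 × (Fin n → 𝒳) × (Fin n → Fin K → Bool) => m.2.1 i)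
      (fun m : 𝒰 × (Fin n → 𝒳) × (Fin n → Fin K → Bool) =>
        ((fun q : {x // x ∈ 𝒥} × Fin i.val =>
            if m.2.2 (Fin.castLE i.isLt.le q.2) q.1.1 = true
            then some (m.2.1 (Fin.castLE i.isLt.le q.2)) else none),
          m.1, fun t : Fin i.val => m.2.2 (Fin.castLE i.isLt.le t)))).symm
  rw [hL, Finset.sum_congr rfl fun i _ => hR i]
  exact hcore
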